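/- arXiv:2104.14825 — 5 statements merged into one kernel-verified Lean document; each statement's English description precedes it below -/
import Mathlib

section
/- For $x_C > 0$, $L > 0$, $k > 0$, the integral $\mathscr{I}_3 = k^2 \int_{-L/2}^{L/2}\int_{-L/2}^{L/2} \frac{y^2(x_C^2+y^2)}{(x_C^2+y^2+z^2)^3}\,dy\,dz$ satisfies the upper bound $\mathscr{I}_3 \le k^2\left[\frac{3\pi}{8}\ln(1+2\rho^2) - \frac{\pi}{4}\frac{\rho^2(5\rho^2+3)}{(1+2\rho^2)^2}\right]$ where $\rho = L/x_C$. -/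
open Real MeasureTheory Set

noncomputable def Ffun (x : ℝ) : ℝ × ℝ → ℝ :=
  fun p => p.2^2 * (x^2 + p.2^2) / (x^2 + p.2^2 + p.1^2)^3

lemma Ffun_cont (x : ℝ) (hx : 0 < x) : Continuous (Ffun x) := by
  apply Continuous.div (by fun_prop) (by fun_prop)
  intro p; positivity

lemma Ffun_nn (x : ℝ) (p : ℝ × ℝ) : 0 ≤ Ffun x p := by
  unfold Ffun; positivity

lemma radial_integral (x b : ℝ) (hx : 0 < x) :
    ∫ r in (0:ℝ)..b, (π * x^2 * r^3 + 3*π/4 * r^5) / (x^2 + r^2)^3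
      = 3*π/8 * (Real.log (x^2+b^2) - Real.log (x^2))
        + π/4 * (x^2/(x^2+b^2) - 1) + π/16 * (x^4/(x^2+b^2)^2 - 1) := by
  have hden : ∀ r : ℝ, x^2 + r^2 ≠ 0 := fun r => by positivity
  have key : ∀ r : ℝ, HasDerivAt (fun t : ℝ => 3*π/8 * Real.log (x^2+t^2)
      + π/4 * (x^2/(x^2+t^2)) + π/16 * (x^4/(x^2+t^2)^2))
      ((π * x^2 * r^3 + 3*π/4 * r^5) / (x^2 + r^2)^3) r := by
    intro r
    have h1 : HasDerivAt (fun t : ℝ => x^2 + t^2) (2*r) r := by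
      simpa using (hasDerivAt_pow 2 r).const_add (x^2)
    have hlog := (h1.log (hden r)).const_mul (3*π/8 : ℝ)
    have hinv := ((hasDerivAt_const r (x^2)).div h1 (hden r)).const_mul (π/4 : ℝ)
    have h2 : HasDerivAt (fun t : ℝ => (x^2+t^2)^2) (2*(x^2+r^2)^1*(2*r)) r := h1.pow 2
    have hinv2 := ((hasDerivAt_const r (x^4)).div h2 (pow_ne_zero 2 (hden r))).const_mul (π/16 : ℝ)
    refine ((hlog.add hinv).add hinv2).congr_deriv ?_
    have := hden r
    field_simp
    ring
  rw [intervalIntegral.integral_eq_sub_of_hasDerivAt (fun r _ => key r)]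
  · have hx2 : (x:ℝ)^2 ≠ 0 := by positivity
    field_simp
    ring
  · apply Continuous.intervalIntegrable
    apply Continuous.div (by continuity) (by continuity)
    exact fun r => pow_ne_zero 3 (hden r)

lemma theta_integral (x r : ℝ) :
    (∫ θ in (-π)..π, ((x^2*r^3/(x^2+r^2)^3) * sin θ^2 + (r^5/(x^2+r^2)^3) * sin θ^4))
      = (π * x^2 * r^3 + 3*π/4 * r^5) / (x^2 + r^2)^3 := by
  have hsin4 : ∫ θ in (-π)..π, sin θ^4 = 3*π/4 := by
    have h := integral_sin_pow (a := -π) (b := π) 2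
    simp at h
    rw [h]; ring
  have hi2 : IntervalIntegrable (fun θ => (x^2*r^3/(x^2+r^2)^3) * sin θ^2) volume (-π) π := by
    apply Continuous.intervalIntegrable; fun_prop
  have hi4 : IntervalIntegrable (fun θ => (r^5/(x^2+r^2)^3) * sin θ^4) volume (-π) π := by
    apply Continuous.intervalIntegrable; fun_prop
  rw [intervalIntegral.integral_add hi2 hi4, intervalIntegral.integral_const_mul,
    intervalIntegral.integral_const_mul, hsin4]
  simp
  ring


lemma square_le (x L : ℝ) (hx : 0 < x) (hL : 0 < L) :
    (∫ z in (-(L/2))..(L/2), ∫ y in (-(L/2))..(L/2),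
        y ^ 2 * (x ^ 2 + y ^ 2) / (x ^ 2 + y ^ 2 + z ^ 2) ^ 3)
      ≤ 3*π/8 * (Real.log (x^2+2*L^2) - Real.log (x^2))
        + π/4 * (x^2/(x^2+2*L^2) - 1) + π/16 * (x^4/(x^2+2*L^2)^2 - 1) := by
  obtain ⟨b, hb, hb2⟩ : ∃ b : ℝ, 0 < b ∧ b^2 = 2*L^2 :=
    ⟨Real.sqrt 2 * L, by positivity, by rw [mul_pow, sq_sqrt (by norm_num : (0:ℝ) ≤ 2)]⟩
  obtain ⟨D, hDdef⟩ : ∃ D : Set (ℝ × ℝ), D = {p | p.1^2 + p.2^2 ≤ b^2} := ⟨_, rfl⟩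
  have hD : MeasurableSet D := by
    rw [hDdef]; exact measurableSet_le (by fun_prop) (by fun_prop)
  have hle : -(L/2) ≤ (L/2) := by linarith
  obtain ⟨S, hSdef⟩ : ∃ S : Set (ℝ × ℝ),
      S = Ioc (-(L/2)) (L/2) ×ˢ Ioc (-(L/2)) (L/2) := ⟨_, rfl⟩
  have hSD : S ⊆ D := by
    rw [hSdef, hDdef]
    rintro ⟨p1, p2⟩ ⟨h1, h2⟩
    simp only [mem_setOf_eq]
    simp only [mem_Ioc] at h1 h2
    nlinarith [h1.1, h1.2, h2.1, h2.2, hb2]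
  have hDK : D ⊆ Icc (-b) b ×ˢ Icc (-b) b := by
    rw [hDdef]
    rintro ⟨p1, p2⟩ hp
    simp only [mem_setOf_eq] at hp
    constructor <;> (simp only [mem_Icc]; constructor <;> nlinarith [sq_nonneg p1, sq_nonneg p2])
  have hFD : IntegrableOn (Ffun x) D := by
    exact (((Ffun_cont x hx).continuousOn).integrableOn_compact
      (isCompact_Icc.prod isCompact_Icc)).mono_set hDK
  have hFS : IntegrableOn (Ffun x) S := hFD.mono_set hSD
  -- Step 1: iterated integral equals set integral over S
  have h1 : (∫ z in (-(L/2))..(L/2), ∫ y in (-(L/2))..(L/2),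
      y ^ 2 * (x ^ 2 + y ^ 2) / (x ^ 2 + y ^ 2 + z ^ 2) ^ 3) = ∫ p in S, Ffun x p := by
    rw [hSdef] at hFS ⊢
    rw [Measure.volume_eq_prod, setIntegral_prod _ (by rwa [← Measure.volume_eq_prod])]
    rw [intervalIntegral.integral_of_le hle]
    refine setIntegral_congr_fun measurableSet_Ioc fun z _ => ?_
    rw [intervalIntegral.integral_of_le hle]
    rfl
  -- Step 2: monotonicity
  have h2 : (∫ p in S, Ffun x p) ≤ ∫ p in D, Ffun x p := by
    apply setIntegral_mono_set hFD
    · exact Filter.Eventually.of_forall fun p => Ffun_nn x p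
    · exact HasSubset.Subset.eventuallyLE hSD
  -- Step 3: polar coordinates
  have h3 : (∫ p in D, Ffun x p)
      = ∫ p in (Ioi (0:ℝ)) ×ˢ (Ioo (-π) π), p.1 • (D.indicator (Ffun x)) (polarCoord.symm p) := by
    rw [← polarCoord_target, integral_comp_polarCoord_symm (D.indicator (Ffun x)),
      integral_indicator hD]
  -- measurability
  have hmeasg : Measurable (fun p : ℝ × ℝ => p.1 • (D.indicator (Ffun x)) (polarCoord.symm p)) := by
    apply Measurable.smul measurable_fst
    refine ((Ffun_cont x hx).measurable.indicator hD).comp ?_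
    show Measurable fun p : ℝ × ℝ => (p.1 * cos p.2, p.1 * sin p.2)
    fun_prop
  -- bound on indicator
  have hCbd : ∀ p : ℝ × ℝ, ‖(D.indicator (Ffun x)) p‖ ≤ b^2*(x^2+b^2)/(x^2)^3 := by
    intro p
    by_cases hp : p ∈ D
    · rw [indicator_of_mem hp, Real.norm_eq_abs, abs_of_nonneg (Ffun_nn x p)]
      rw [hDdef] at hp
      simp only [mem_setOf_eq] at hp
      unfold Ffun
      apply div_le_div₀ (by positivity) ?_ (by positivity) ?_
      · nlinarith [sq_nonneg p.1, sq_nonneg p.2]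
      · apply pow_le_pow_left₀ (by positivity)
        nlinarith [sq_nonneg p.1, sq_nonneg p.2]
    · rw [indicator_of_notMem hp]
      simp only [norm_zero]
      positivity
  -- the polar point norm identity
  have hkey : ∀ r θ : ℝ, (r*cos θ)^2 + (r*sin θ)^2 = r^2 := by
    intro r θ
    have hsc := sin_sq_add_cos_sq θ
    linear_combination r^2 * hsc
  -- integrability of the polar integrand on the target
  have hg : IntegrableOn (fun p : ℝ × ℝ => p.1 • (D.indicator (Ffun x)) (polarCoord.symm p))
      ((Ioi (0:ℝ)) ×ˢ (Ioo (-π) π)) := by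
    have hsplit : (Ioi (0:ℝ)) ×ˢ (Ioo (-π) π)
        = (Ioc (0:ℝ) b) ×ˢ (Ioo (-π) π) ∪ (Ioi b) ×ˢ (Ioo (-π) π) := by
      rw [← union_prod, Ioc_union_Ioi_eq_Ioi hb.le]
    rw [hsplit]
    apply IntegrableOn.union
    · have hfin : volume ((Ioc (0:ℝ) b) ×ˢ (Ioo (-π) π)) ≠ ⊤ := by
        refine ne_of_lt (lt_of_le_of_lt
          (measure_mono (prod_mono Ioc_subset_Icc_self Ioo_subset_Icc_self)) ?_)
        exact (isCompact_Icc.prod isCompact_Icc).measure_lt_top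
      have hbdd : ∀ᵐ p ∂(volume.restrict ((Ioc (0:ℝ) b) ×ˢ (Ioo (-π) π))),
          ‖(fun p : ℝ × ℝ => p.1 • (D.indicator (Ffun x)) (polarCoord.symm p)) p‖
            ≤ b * (b^2*(x^2+b^2)/(x^2)^3) := by
        apply (ae_restrict_iff' (measurableSet_Ioc.prod measurableSet_Ioo)).mpr
        refine Filter.Eventually.of_forall fun p hp => ?_
        rw [norm_smul, Real.norm_eq_abs]
        have h1 : |p.1| ≤ b := by
          rcases hp.1 with ⟨hp1, hp2⟩
          rw [abs_of_pos hp1]; exact hp2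
        exact mul_le_mul h1 (hCbd _) (norm_nonneg _) hb.le
      exact Measure.integrableOn_of_bounded hfin hmeasg.aestronglyMeasurable hbdd
    · apply (integrableOn_congr_fun ?_ (measurableSet_Ioi.prod measurableSet_Ioo)).mpr
        (integrableOn_zero)
      rintro ⟨r, θ⟩ ⟨hr, _⟩
      simp only [mem_Ioi] at hr
      have hnot : polarCoord.symm (r, θ) ∉ D := by
        rw [hDdef]
        simp only [polarCoord_symm_apply, mem_setOf_eq]
        push_neg
        nlinarith [hkey r θ, hr, hb]
      show r • (D.indicator (Ffun x)) (polarCoord.symm (r, θ)) = 0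
      rw [indicator_of_notMem hnot, smul_zero]
  -- Step 4: Fubini on the target
  have h4 : (∫ p in (Ioi (0:ℝ)) ×ˢ (Ioo (-π) π), p.1 • (D.indicator (Ffun x)) (polarCoord.symm p))
      = ∫ r in Ioi (0:ℝ), ∫ θ in Ioo (-π) π, r • (D.indicator (Ffun x)) (polarCoord.symm (r, θ)) := by
    rw [Measure.volume_eq_prod, setIntegral_prod _ (by rwa [← Measure.volume_eq_prod])]
  -- Step 5: inner angular integral
  have h5 : ∀ r ∈ Ioi (0:ℝ),
      (∫ θ in Ioo (-π) π, r • (D.indicator (Ffun x)) (polarCoord.symm (r, θ)))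
      = (Ioc (0:ℝ) b).indicator
          (fun r => (π * x^2 * r^3 + 3*π/4 * r^5) / (x^2 + r^2)^3) r := by
    intro r hr
    simp only [mem_Ioi] at hr
    rcases le_or_gt r b with hrb | hrb
    · rw [indicator_of_mem (mem_Ioc.mpr ⟨hr, hrb⟩)]
      have hcong : ∀ θ : ℝ, r • (D.indicator (Ffun x)) (polarCoord.symm (r, θ))
          = (x^2*r^3/(x^2+r^2)^3) * sin θ^2 + (r^5/(x^2+r^2)^3) * sin θ^4 := by
        intro θ
        have hmem : (polarCoord.symm (r, θ)) ∈ D := by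
          rw [hDdef]
          simp only [polarCoord_symm_apply, mem_setOf_eq]
          nlinarith [hkey r θ, hr, hrb, hb]
        rw [indicator_of_mem hmem]
        simp only [polarCoord_symm_apply]
        unfold Ffun
        simp only [smul_eq_mul]
        have hden2 : x^2 + (r*sin θ)^2 + (r*cos θ)^2 = x^2 + r^2 := by
          linear_combination (hkey r θ)
        rw [hden2]
        have hne : x^2 + r^2 ≠ 0 := by positivity
        field_simp
      calc (∫ θ in Ioo (-π) π, r • (D.indicator (Ffun x)) (polarCoord.symm (r, θ)))
          = ∫ θ in Ioo (-π) π,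
              ((x^2*r^3/(x^2+r^2)^3) * sin θ^2 + (r^5/(x^2+r^2)^3) * sin θ^4) :=
            setIntegral_congr_fun measurableSet_Ioo fun θ _ => hcong θ
        _ = ∫ θ in (-π)..π,
              ((x^2*r^3/(x^2+r^2)^3) * sin θ^2 + (r^5/(x^2+r^2)^3) * sin θ^4) := by
            rw [intervalIntegral.integral_of_le (by linarith [pi_pos]),
              integral_Ioc_eq_integral_Ioo]
        _ = (π * x^2 * r^3 + 3*π/4 * r^5) / (x^2 + r^2)^3 := theta_integral x r
    · rw [indicator_of_notMem (by simp [mem_Ioc, hrb.not_ge])]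
      have hzero : ∀ θ : ℝ, r • (D.indicator (Ffun x)) (polarCoord.symm (r, θ)) = 0 := by
        intro θ
        have hnot : polarCoord.symm (r, θ) ∉ D := by
          rw [hDdef]
          simp only [polarCoord_symm_apply, mem_setOf_eq]
          push_neg
          nlinarith [hkey r θ, hrb, hr, hb]
        rw [indicator_of_notMem hnot, smul_zero]
      simp only [hzero, integral_zero]
  -- Step 6: reduce to interval integral and evaluate
  have h6 : (∫ r in Ioi (0:ℝ),
        ∫ θ in Ioo (-π) π, r • (D.indicator (Ffun x)) (polarCoord.symm (r, θ)))
      = ∫ r in (0:ℝ)..b, (π * x^2 * r^3 + 3*π/4 * r^5) / (x^2 + r^2)^3 := by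
    rw [setIntegral_congr_fun measurableSet_Ioi h5,
      setIntegral_indicator measurableSet_Ioc,
      inter_eq_right.mpr Ioc_subset_Ioi_self,
      intervalIntegral.integral_of_le hb.le]
  rw [h1]
  refine le_trans h2 ?_
  rw [h3, h4, h6, radial_integral x b hx, hb2]

theorem I3_upper_bound (xC L k ρ : ℝ) (hx : 0 < xC) (hL : 0 < L) (hk : 0 < k)
    (hρ : ρ = L / xC) :
    k ^ 2 *
      ∫ z in (-(L/2))..(L/2), ∫ y in (-(L/2))..(L/2),
        y ^ 2 * (xC ^ 2 + y ^ 2) / (xC ^ 2 + y ^ 2 + z ^ 2) ^ 3 ≤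
    k ^ 2 * (3 * Real.pi / 8 * Real.log (1 + 2 * ρ ^ 2) -
      Real.pi / 4 * (ρ ^ 2 * (5 * ρ ^ 2 + 3) / (1 + 2 * ρ ^ 2) ^ 2)) := by
  subst hρ
  apply mul_le_mul_of_nonneg_left ?_ (by positivity : (0:ℝ) ≤ k^2)
  refine le_trans (square_le xC L hx hL) (le_of_eq ?_)
  have hx0 : xC ≠ 0 := hx.ne'
  have hd : xC^2 + 2*L^2 ≠ 0 := by positivity
  have hr : (1:ℝ) + 2*(L/xC)^2 ≠ 0 := by positivity
  have hlog : Real.log (xC^2+2*L^2) - Real.log (xC^2) = Real.log (1 + 2*(L/xC)^2) := by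
    rw [← Real.log_div hd (by positivity)]
    congr 1
    field_simp
  have halg : π/4 * (xC^2/(xC^2+2*L^2) - 1) + π/16 * (xC^4/(xC^2+2*L^2)^2 - 1)
      = -(π/4 * ((L/xC)^2 * (5*(L/xC)^2+3)/(1+2*(L/xC)^2)^2)) := by
    field_simp
    ring
  linear_combination (3*π/8 : ℝ) * hlog + halg
end

section
/- For $x_C > 0$, $L > 0$, $k > 0$, the integral $\mathscr{I}_5 = k^2 \int_{-L/2}^{L/2}\int_{-L/2}^{L/2} \frac{z^2(x_C^2+y^2)}{(x_C^2+y^2+z^2)^3}\,dy\,dz$ satisfies $\mathscr{I}_5 \le k^2\left[\frac{\pi}{8}\ln(1+2\rho^2) + \frac{\pi}{4}\frac{\rho^2(\rho^2-1)}{(1+2\rho^2)^2}\right]$ where $\rho = L/x_C$. -/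
open Real MeasureTheory Set intervalIntegral

noncomputable def Hfun (a x : ℝ) : ℝ :=
  π * a / 2 * (-(a + x ^ 2)⁻¹ + a / 2 * ((a + x ^ 2) ^ 2)⁻¹)
  + π / 8 * (Real.log (a + x ^ 2) + 2 * a * (a + x ^ 2)⁻¹ - a ^ 2 / 2 * ((a + x ^ 2) ^ 2)⁻¹)

lemma theta_int (a r : ℝ) (ha : 0 < a) :
    ∫ θ in (-π)..π, r * ((r * Real.cos θ) ^ 2 * (a + (r * Real.sin θ) ^ 2) /
        (a + (r * Real.sin θ) ^ 2 + (r * Real.cos θ) ^ 2) ^ 3) =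
    r ^ 3 * (π * a + π / 4 * r ^ 2) / (a + r ^ 2) ^ 3 := by
  have hd : (a + r ^ 2) ≠ 0 := by positivity
  have hcong : ∀ θ : ℝ, r * ((r * Real.cos θ) ^ 2 * (a + (r * Real.sin θ) ^ 2) /
        (a + (r * Real.sin θ) ^ 2 + (r * Real.cos θ) ^ 2) ^ 3)
      = (r ^ 3 * a / (a + r ^ 2) ^ 3) * Real.cos θ ^ 2
        + (r ^ 5 / (a + r ^ 2) ^ 3) * (Real.sin θ ^ 2 * Real.cos θ ^ 2) := by
    intro θ
    have key : (r * Real.sin θ) ^ 2 + (r * Real.cos θ) ^ 2 = r ^ 2 := by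
      have := Real.sin_sq_add_cos_sq θ; nlinarith
    rw [add_assoc, key]
    have hs : (r * Real.sin θ) ^ 2 = r ^ 2 - (r * Real.cos θ) ^ 2 := by nlinarith
    field_simp
  rw [intervalIntegral.integral_congr (fun θ _ => hcong θ)]
  rw [intervalIntegral.integral_add (f := fun x => r ^ 3 * a / (a + r ^ 2) ^ 3 * Real.cos x ^ 2)
    (g := fun x => r ^ 5 / (a + r ^ 2) ^ 3 * (Real.sin x ^ 2 * Real.cos x ^ 2)) (((continuous_const.mul (Real.continuous_cos.pow 2)).intervalIntegrable _ _))
    ((continuous_const.mul ((Real.continuous_sin.pow 2).mul (Real.continuous_cos.pow 2))).intervalIntegrable _ _)]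
  rw [intervalIntegral.integral_const_mul, intervalIntegral.integral_const_mul,
    integral_cos_sq, integral_sin_sq_mul_cos_sq]
  have h4 : Real.sin (π * 4) = 0 := by
    rw [mul_comm]; simpa using Real.sin_nat_mul_pi 4
  simp only [Real.sin_pi, Real.sin_neg, Real.cos_pi, Real.cos_neg]
  field_simp
  rw [Real.sin_neg, h4]
  ring

lemma Hfun_hasDeriv (a x : ℝ) (ha : 0 < a) :
    HasDerivAt (Hfun a) (x ^ 3 * (π * a + π / 4 * x ^ 2) / (a + x ^ 2) ^ 3) x := by
  have hsx : a + x ^ 2 ≠ 0 := by positivity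
  have hs : HasDerivAt (fun x : ℝ => a + x ^ 2) (2 * x) x := by
    simpa using ((hasDerivAt_pow 2 x).const_add a)
  have h1 := hs.inv hsx
  have h2 := (hs.pow 2).inv (pow_ne_zero 2 hsx)
  have h3 := (Real.hasDerivAt_log hsx).comp x hs
  have C := ((h1.neg.add (h2.const_mul (a / 2))).const_mul (π * a / 2)).add
    (((h3.add (h1.const_mul (2 * a))).sub (h2.const_mul (a ^ 2 / 2))).const_mul (π / 8))
  refine (show HasDerivAt (Hfun a) _ x from C).congr_deriv ?_
  simp only [Pi.pow_apply]
  field_simp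
  ring

lemma r_int (a R : ℝ) (ha : 0 < a) :
    ∫ r in (0:ℝ)..R, r ^ 3 * (π * a + π / 4 * r ^ 2) / (a + r ^ 2) ^ 3
      = Hfun a R - Hfun a 0 := by
  have hcont : Continuous fun r : ℝ => r ^ 3 * (π * a + π / 4 * r ^ 2) / (a + r ^ 2) ^ 3 :=
    Continuous.div (by fun_prop) (by fun_prop) (fun x => by positivity)
  exact intervalIntegral.integral_eq_sub_of_hasDerivAt
    (fun x _ => Hfun_hasDeriv a x ha) (hcont.intervalIntegrable _ _)

lemma F_mono (t T : ℝ) (ht : 1 ≤ t) (htT : t ≤ T) :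
    π/8 * Real.log t + π/16 - π/4 * t⁻¹ + 3*π/16 * (t^2)⁻¹ ≤
    π/8 * Real.log T + π/16 - π/4 * T⁻¹ + 3*π/16 * (T^2)⁻¹ := by
  have hsub : Set.uIcc t T ⊆ {x : ℝ | x ≠ 0} := by
    rw [Set.uIcc_of_le htT]
    intro x hx
    have : (1:ℝ) ≤ x := le_trans ht hx.1
    simp only [mem_setOf_eq]; linarith
  have hderiv : ∀ x ∈ Set.uIcc t T,
      HasDerivAt (fun x : ℝ => π/8 * Real.log x + π/16 - π/4 * x⁻¹ + 3*π/16 * (x^2)⁻¹)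
        (π/8 * x⁻¹ + π/4 * (x^2)⁻¹ - 3*π/8 * (x^3)⁻¹) x := by
    intro x hx
    have hx0 : x ≠ 0 := hsub hx
    have h1 := (Real.hasDerivAt_log hx0).const_mul (π/8)
    have h2 := (hasDerivAt_inv hx0).const_mul (π/4)
    have h3 := ((hasDerivAt_pow 2 x).inv (pow_ne_zero 2 hx0)).const_mul (3*π/16)
    have C := ((h1.add_const (π/16)).sub h2).add h3
    refine (show HasDerivAt (fun x : ℝ => π/8 * Real.log x + π/16 - π/4 * x⁻¹ + 3*π/16 * (x^2)⁻¹) _ x from C).congr_deriv ?_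
    field_simp
    ring
  have hcont : ContinuousOn (fun x : ℝ => π/8 * x⁻¹ + π/4 * (x^2)⁻¹ - 3*π/8*(x^3)⁻¹)
      {x : ℝ | x ≠ 0} := by
    apply ContinuousOn.sub
    · apply ContinuousOn.add
      · exact continuousOn_const.mul (ContinuousOn.inv₀ continuous_id.continuousOn
          (fun x hx => hx))
      · exact continuousOn_const.mul (ContinuousOn.inv₀ (continuous_pow 2).continuousOn
          (fun x hx => pow_ne_zero _ hx))
    · exact continuousOn_const.mul (ContinuousOn.inv₀ (continuous_pow 3).continuousOn
        (fun x hx => pow_ne_zero _ hx))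
  have hint : IntervalIntegrable (fun x : ℝ => π/8 * x⁻¹ + π/4 * (x^2)⁻¹ - 3*π/8*(x^3)⁻¹)
      volume t T := (hcont.mono hsub).intervalIntegrable
  have key := intervalIntegral.integral_eq_sub_of_hasDerivAt hderiv hint
  have hnn : 0 ≤ ∫ x in t..T, (π/8 * x⁻¹ + π/4 * (x^2)⁻¹ - 3*π/8*(x^3)⁻¹) := by
    apply intervalIntegral.integral_nonneg htT
    intro x hx
    have hx1 : (1:ℝ) ≤ x := le_trans ht hx.1
    have hx0 : (0:ℝ) < x := by linarith
    have e : π/8 * x⁻¹ + π/4 * (x^2)⁻¹ - 3*π/8*(x^3)⁻¹ = π * (x^2 + 2*x - 3)/(8 * x^3) := by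
      field_simp; ring
    rw [e]
    apply div_nonneg _ (by positivity)
    have : 0 ≤ x^2 + 2*x - 3 := by nlinarith
    exact mul_nonneg Real.pi_pos.le this
  linarith [key ▸ hnn]

lemma disk_to_polar (a R : ℝ) (ha : 0 < a) (hR : 0 < R) :
    ∫ p in {q : ℝ × ℝ | q.1 ^ 2 + q.2 ^ 2 ≤ R ^ 2},
        p.1 ^ 2 * (a + p.2 ^ 2) / (a + p.2 ^ 2 + p.1 ^ 2) ^ 3
      = ∫ p in (Ioc 0 R ×ˢ Ioo (-π) π),
        p.1 * ((p.1 * Real.cos p.2) ^ 2 * (a + (p.1 * Real.sin p.2) ^ 2) /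
          (a + (p.1 * Real.sin p.2) ^ 2 + (p.1 * Real.cos p.2) ^ 2) ^ 3) := by
  set g : ℝ × ℝ → ℝ := fun q => q.1 ^ 2 * (a + q.2 ^ 2) / (a + q.2 ^ 2 + q.1 ^ 2) ^ 3 with hg
  set D : Set (ℝ × ℝ) := {q | q.1 ^ 2 + q.2 ^ 2 ≤ R ^ 2} with hDdef
  have hD : MeasurableSet D := by
    have : IsClosed D := isClosed_le (by fun_prop) continuous_const
    exact this.measurableSet
  rw [← MeasureTheory.integral_indicator hD, ← integral_comp_polarCoord_symm (D.indicator g)]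
  have hset : MeasurableSet (Ioc (0:ℝ) R ×ˢ Ioo (-π) π) :=
    measurableSet_Ioc.prod measurableSet_Ioo
  have key : ∀ p ∈ polarCoord.target,
      p.1 • D.indicator g (polarCoord.symm p)
        = (Ioc (0:ℝ) R ×ˢ Ioo (-π) π).indicator
            (fun p => p.1 * g (polarCoord.symm p)) p := by
    rintro ⟨r, θ⟩ hp
    have hp' : r ∈ Ioi (0:ℝ) ∧ θ ∈ Ioo (-π) π := hp
    obtain ⟨hr, hθ⟩ := hp'
    simp only [mem_Ioi] at hr
    have hsymm : polarCoord.symm (r, θ) = (r * Real.cos θ, r * Real.sin θ) := rfl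
    have hmem : polarCoord.symm (r, θ) ∈ D ↔ r ≤ R := by
      rw [hsymm]
      simp only [hDdef, mem_setOf_eq]
      have hr2 : (r * Real.cos θ) ^ 2 + (r * Real.sin θ) ^ 2 = r ^ 2 := by
        have := Real.sin_sq_add_cos_sq θ; nlinarith
      rw [hr2]
      constructor
      · intro h
        nlinarith [sq_nonneg (r - R), sq_nonneg (r + R)]
      · intro h
        nlinarith [sq_nonneg (r - R), sq_nonneg (r + R)]
    by_cases hrR : r ≤ R
    · rw [Set.indicator_of_mem (hmem.mpr hrR), Set.indicator_of_mem (by exact ⟨⟨hr, hrR⟩, hθ⟩)]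
      simp [hsymm]
    · rw [Set.indicator_of_notMem (fun h => hrR (hmem.mp h)),
        Set.indicator_of_notMem (by rintro ⟨⟨_, h⟩, _⟩; exact hrR h)]
      simp
  rw [setIntegral_congr_fun (polarCoord.open_target.measurableSet) key,
    setIntegral_indicator hset]
  congr 1
  rw [show polarCoord.target = Ioi (0:ℝ) ×ˢ Ioo (-π) π from rfl]
  rw [Set.inter_eq_self_of_subset_right (Set.prod_mono Ioc_subset_Ioi_self Subset.rfl)]

set_option maxHeartbeats 1600000 in
theorem I5_upper_bound (xC L k ρ : ℝ) (hx : 0 < xC) (hL : 0 < L) (hk : 0 < k)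
    (hρ : ρ = L / xC) :
    k ^ 2 *
      ∫ z in (-(L/2))..(L/2), ∫ y in (-(L/2))..(L/2),
        z ^ 2 * (xC ^ 2 + y ^ 2) / (xC ^ 2 + y ^ 2 + z ^ 2) ^ 3 ≤
    k ^ 2 * (Real.pi / 8 * Real.log (1 + 2 * ρ ^ 2) +
      Real.pi / 4 * (ρ ^ 2 * (ρ ^ 2 - 1) / (1 + 2 * ρ ^ 2) ^ 2)) := by
  have ha : (0:ℝ) < xC ^ 2 := by positivity
  set a : ℝ := xC ^ 2 with hadef
  set c : ℝ := L / 2 with hcdef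
  have hc : 0 < c := by positivity
  set R : ℝ := L / Real.sqrt 2 with hRdef
  have hR : 0 < R := by positivity
  have hR2 : R ^ 2 = L ^ 2 / 2 := by
    rw [hRdef, div_pow, Real.sq_sqrt (by norm_num : (2:ℝ) ≥ 0)]
  set g : ℝ × ℝ → ℝ := fun q => q.1 ^ 2 * (a + q.2 ^ 2) / (a + q.2 ^ 2 + q.1 ^ 2) ^ 3 with hg
  have hgc : Continuous g :=
    Continuous.div (by fun_prop) (by fun_prop) (fun q => by positivity)
  have hgnn : ∀ q, 0 ≤ g q := fun q => by
    simp only [hg]; positivity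
  set D : Set (ℝ × ℝ) := {q | q.1 ^ 2 + q.2 ^ 2 ≤ R ^ 2} with hDdef
  -- Step 1: LHS as set integral over the square
  have step1 : (∫ z in (-c)..c, ∫ y in (-c)..c,
      z ^ 2 * (a + y ^ 2) / (a + y ^ 2 + z ^ 2) ^ 3)
      = ∫ p in (Ioc (-c) c ×ˢ Ioc (-c) c), g p := by
    have hint : IntegrableOn g (Ioc (-c) c ×ˢ Ioc (-c) c) := by
      apply IntegrableOn.mono_set (s := Ioc (-c) c ×ˢ Ioc (-c) c)
        (t := Icc (-c) c ×ˢ Icc (-c) c)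
      · exact hgc.continuousOn.integrableOn_compact (isCompact_Icc.prod isCompact_Icc)
      · exact Set.prod_mono Ioc_subset_Icc_self Ioc_subset_Icc_self
    rw [Measure.volume_eq_prod] at hint ⊢
    rw [MeasureTheory.setIntegral_prod g hint]
    rw [intervalIntegral.integral_of_le (by linarith)]
    apply setIntegral_congr_fun measurableSet_Ioc
    intro z _
    dsimp only
    rw [intervalIntegral.integral_of_le (by linarith)]
  -- Step 2: bound by the disk integral
  have hsub : Ioc (-c) c ×ˢ Ioc (-c) c ⊆ D := by
    rintro ⟨z, y⟩ ⟨hz, hy⟩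
    simp only [hDdef, mem_setOf_eq]
    have h1 : z ^ 2 ≤ c ^ 2 := sq_le_sq' (by linarith [hz.1]) hz.2
    have h2 : y ^ 2 ≤ c ^ 2 := sq_le_sq' (by linarith [hy.1]) hy.2
    rw [hR2]
    have : c ^ 2 = L ^ 2 / 4 := by rw [hcdef]; ring
    nlinarith
  have hDsub : D ⊆ Icc (-R) R ×ˢ Icc (-R) R := by
    rintro ⟨z, y⟩ hzy
    simp only [hDdef, mem_setOf_eq] at hzy
    constructor
    · have : z ^ 2 ≤ R ^ 2 := by nlinarith [sq_nonneg y]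
      constructor <;> nlinarith [sq_nonneg (z - R), sq_nonneg (z + R)]
    · have : y ^ 2 ≤ R ^ 2 := by nlinarith [sq_nonneg z]
      constructor <;> nlinarith [sq_nonneg (y - R), sq_nonneg (y + R)]
  have hDint : IntegrableOn g D := by
    apply IntegrableOn.mono_set (t := Icc (-R) R ×ˢ Icc (-R) R)
    · exact hgc.continuousOn.integrableOn_compact (isCompact_Icc.prod isCompact_Icc)
    · exact hDsub
  have step2 : (∫ p in (Ioc (-c) c ×ˢ Ioc (-c) c), g p) ≤ ∫ p in D, g p := by
    apply setIntegral_mono_set hDint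
    · exact Filter.Eventually.of_forall hgnn
    · exact HasSubset.Subset.eventuallyLE hsub
  -- Step 3: polar coordinates and explicit evaluation
  have step3 : (∫ p in D, g p) = Hfun a R - Hfun a 0 := by
    rw [hDdef]
    rw [disk_to_polar a R ha hR]
    have hint2 : IntegrableOn
        (fun p : ℝ × ℝ => p.1 * ((p.1 * Real.cos p.2) ^ 2 * (a + (p.1 * Real.sin p.2) ^ 2) /
          (a + (p.1 * Real.sin p.2) ^ 2 + (p.1 * Real.cos p.2) ^ 2) ^ 3))
        (Ioc 0 R ×ˢ Ioo (-π) π) := by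
      have hcont2 : Continuous (fun p : ℝ × ℝ =>
          p.1 * ((p.1 * Real.cos p.2) ^ 2 * (a + (p.1 * Real.sin p.2) ^ 2) /
          (a + (p.1 * Real.sin p.2) ^ 2 + (p.1 * Real.cos p.2) ^ 2) ^ 3)) := by
        apply continuous_fst.mul
        apply Continuous.div (by fun_prop) (by fun_prop)
        intro q
        have key : (q.1 * Real.sin q.2) ^ 2 + (q.1 * Real.cos q.2) ^ 2 = q.1 ^ 2 := by
          have := Real.sin_sq_add_cos_sq q.2; nlinarith
        rw [add_assoc, key]
        positivity
      apply IntegrableOn.mono_set (t := Icc 0 R ×ˢ Icc (-π) π)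
      · exact hcont2.continuousOn.integrableOn_compact (isCompact_Icc.prod isCompact_Icc)
      · exact Set.prod_mono Ioc_subset_Icc_self Ioo_subset_Icc_self
    rw [Measure.volume_eq_prod] at hint2
    rw [Measure.volume_eq_prod, MeasureTheory.setIntegral_prod _ hint2]
    have inner : ∀ r : ℝ, (∫ θ in Ioo (-π) π,
        r * ((r * Real.cos θ) ^ 2 * (a + (r * Real.sin θ) ^ 2) /
          (a + (r * Real.sin θ) ^ 2 + (r * Real.cos θ) ^ 2) ^ 3))
        = r ^ 3 * (π * a + π / 4 * r ^ 2) / (a + r ^ 2) ^ 3 := by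
      intro r
      rw [← MeasureTheory.integral_Ioc_eq_integral_Ioo,
        ← intervalIntegral.integral_of_le (by linarith [Real.pi_pos])]
      exact theta_int a r ha
    calc (∫ r in Ioc (0:ℝ) R, ∫ θ in Ioo (-π) π,
        r * ((r * Real.cos θ) ^ 2 * (a + (r * Real.sin θ) ^ 2) /
          (a + (r * Real.sin θ) ^ 2 + (r * Real.cos θ) ^ 2) ^ 3))
        = ∫ r in Ioc (0:ℝ) R, r ^ 3 * (π * a + π / 4 * r ^ 2) / (a + r ^ 2) ^ 3 := by
          apply setIntegral_congr_fun measurableSet_Ioc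
          intro r _
          exact inner r
      _ = ∫ r in (0:ℝ)..R, r ^ 3 * (π * a + π / 4 * r ^ 2) / (a + r ^ 2) ^ 3 := by
          rw [intervalIntegral.integral_of_le hR.le]
      _ = Hfun a R - Hfun a 0 := r_int a R ha
  -- Step 4: algebra and monotonicity
  set t : ℝ := 1 + ρ ^ 2 / 2 with htdef
  set T : ℝ := 1 + 2 * ρ ^ 2 with hTdef
  have hρ0 : 0 < ρ := by rw [hρ]; positivity
  have ht1 : (1:ℝ) ≤ t := by rw [htdef]; nlinarith
  have htT : t ≤ T := by rw [htdef, hTdef]; nlinarith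
  have hT1 : (1:ℝ) ≤ T := le_trans ht1 htT
  have ht0 : t ≠ 0 := by linarith
  have hT0 : T ≠ 0 := by linarith
  have hat : a + R ^ 2 = a * t := by
    rw [hR2, htdef, hadef, hρ]
    field_simp
  have step4 : Hfun a R - Hfun a 0
      = π/8 * Real.log t + π/16 - π/4 * t⁻¹ + 3*π/16 * (t^2)⁻¹ := by
    rw [Hfun, Hfun, hat]
    simp only [ne_eq, OfNat.ofNat_ne_zero, not_false_eq_true, zero_pow, add_zero]
    rw [Real.log_mul (ne_of_gt ha) ht0]
    have hane : a ≠ 0 := ne_of_gt ha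
    field_simp
    ring
  have step5 : π / 8 * Real.log T + π / 4 * (ρ ^ 2 * (ρ ^ 2 - 1) / T ^ 2)
      = π/8 * Real.log T + π/16 - π/4 * T⁻¹ + 3*π/16 * (T^2)⁻¹ := by
    have hρ2 : ρ ^ 2 = (T - 1) / 2 := by rw [hTdef]; ring
    rw [hρ2]
    field_simp
    ring
  have final : (∫ z in (-c)..c, ∫ y in (-c)..c,
      z ^ 2 * (a + y ^ 2) / (a + y ^ 2 + z ^ 2) ^ 3)
      ≤ π / 8 * Real.log T + π / 4 * (ρ ^ 2 * (ρ ^ 2 - 1) / T ^ 2) := by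
    rw [step1, step5]
    calc (∫ p in (Ioc (-c) c ×ˢ Ioc (-c) c), g p)
        ≤ ∫ p in D, g p := step2
      _ = Hfun a R - Hfun a 0 := step3
      _ = π/8 * Real.log t + π/16 - π/4 * t⁻¹ + 3*π/16 * (t^2)⁻¹ := step4
      _ ≤ π/8 * Real.log T + π/16 - π/4 * T⁻¹ + 3*π/16 * (T^2)⁻¹ := F_mono t T ht1 htT
  have hk2 : (0:ℝ) ≤ k ^ 2 := sq_nonneg k
  exact mul_le_mul_of_nonneg_left final hk2
end

section
/- In polar coordinates, for any $R > 0$ and $x_C > 0$, $\int_0^{2\pi}\int_0^R \frac{s^2\cos^2\phi\,(x_C^2 + s^2\cos^2\phi)}{(x_C^2+s^2)^3}\,s\,ds\,d\phi = \frac{3\pi}{8}\ln\left(1+\frac{R^2}{x_C^2}\right) - \frac{\pi}{16}\frac{(R^2/x_C^2)(5R^2/x_C^2+6)}{(1+R^2/x_C^2)^2}$. -/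
open Real

private lemma hasDerivAt_K (x c : ℝ) (hx : 0 < x) (s : ℝ) :
    HasDerivAt (fun t : ℝ =>
      c ^ 2 * (x ^ 2 / 2 * (-(x ^ 2 + t ^ 2)⁻¹ + x ^ 2 / 2 * ((x ^ 2 + t ^ 2) ^ 2)⁻¹)) +
      c ^ 4 * (1 / 2 * (Real.log (x ^ 2 + t ^ 2) + 2 * x ^ 2 * (x ^ 2 + t ^ 2)⁻¹ -
          x ^ 4 / 2 * ((x ^ 2 + t ^ 2) ^ 2)⁻¹)))
      (s ^ 2 * c ^ 2 * (x ^ 2 + s ^ 2 * c ^ 2) / (x ^ 2 + s ^ 2) ^ 3 * s) s := by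
  have hv : (0 : ℝ) < x ^ 2 + s ^ 2 := by positivity
  have h1 : HasDerivAt (fun t : ℝ => x ^ 2 + t ^ 2) (2 * s) s := by
    simpa using (hasDerivAt_pow 2 s).const_add (x ^ 2)
  have h2 : HasDerivAt (fun t : ℝ => (x ^ 2 + t ^ 2)⁻¹)
      (-(2 * s) / (x ^ 2 + s ^ 2) ^ 2) s := h1.inv hv.ne'
  have h3 : HasDerivAt (fun t : ℝ => (x ^ 2 + t ^ 2) ^ 2)
      (2 * (x ^ 2 + s ^ 2) * (2 * s)) s := by
    simpa [mul_comm, mul_assoc] using h1.fun_pow 2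
  have h4 : HasDerivAt (fun t : ℝ => ((x ^ 2 + t ^ 2) ^ 2)⁻¹)
      (-(2 * (x ^ 2 + s ^ 2) * (2 * s)) / ((x ^ 2 + s ^ 2) ^ 2) ^ 2) s :=
    h3.inv (by positivity)
  have h5 : HasDerivAt (fun t : ℝ => Real.log (x ^ 2 + t ^ 2))
      ((2 * s) / (x ^ 2 + s ^ 2)) s := h1.log hv.ne'
  have H := (((h2.neg.add (h4.const_mul (x ^ 2 / 2))).const_mul (x ^ 2 / 2)).const_mul
      (c ^ 2)).add
    ((((h5.add (h2.const_mul (2 * x ^ 2))).sub (h4.const_mul (x ^ 4 / 2))).const_mul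
      (1 / 2)).const_mul (c ^ 4))
  refine H.congr_deriv ?_
  field_simp
  ring

private lemma hasDerivAt_H (A B : ℝ) (φ : ℝ) :
    HasDerivAt (fun φ : ℝ =>
      A * (φ / 2 + Real.sin (2 * φ) / 4) +
      B * (3 * φ / 8 + Real.sin (2 * φ) / 4 + Real.sin (4 * φ) / 32))
      (Real.cos φ ^ 2 * A + Real.cos φ ^ 4 * B) φ := by
  have h2 : HasDerivAt (fun φ : ℝ => Real.sin (2 * φ)) (Real.cos (2 * φ) * 2) φ := by
    simpa [Function.comp_def] using (Real.hasDerivAt_sin (2 * φ)).comp φ ((hasDerivAt_id φ).const_mul 2)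
  have h4 : HasDerivAt (fun φ : ℝ => Real.sin (4 * φ)) (Real.cos (4 * φ) * 4) φ := by
    simpa [Function.comp_def] using (Real.hasDerivAt_sin (4 * φ)).comp φ ((hasDerivAt_id φ).const_mul 4)
  have hid : HasDerivAt (fun φ : ℝ => φ) 1 φ := hasDerivAt_id φ
  have H := (((hid.div_const 2).add (h2.div_const 4)).const_mul A).add
    (((((hid.const_mul 3).div_const 8).add (h2.div_const 4)).add
      (h4.div_const 32)).const_mul B)
  refine H.congr_deriv ?_
  simp only [show (4 : ℝ) * φ = 2 * (2 * φ) by ring, Real.cos_two_mul]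
  ring

theorem I3_disk_polar (R xC : ℝ) (hR : 0 < R) (hx : 0 < xC) :
    (∫ φ in (0 : ℝ)..(2 * Real.pi), ∫ s in (0 : ℝ)..R,
        s ^ 2 * Real.cos φ ^ 2 * (xC ^ 2 + s ^ 2 * Real.cos φ ^ 2) /
          (xC ^ 2 + s ^ 2) ^ 3 * s) =
    3 * Real.pi / 8 * Real.log (1 + R ^ 2 / xC ^ 2) -
      Real.pi / 16 *
        ((R ^ 2 / xC ^ 2) * (5 * (R ^ 2 / xC ^ 2) + 6) /
          (1 + R ^ 2 / xC ^ 2) ^ 2) := by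
  set F : ℝ → ℝ := fun t =>
    xC ^ 2 / 2 * (-(xC ^ 2 + t ^ 2)⁻¹ + xC ^ 2 / 2 * ((xC ^ 2 + t ^ 2) ^ 2)⁻¹) with hF
  set G : ℝ → ℝ := fun t =>
    1 / 2 * (Real.log (xC ^ 2 + t ^ 2) + 2 * xC ^ 2 * (xC ^ 2 + t ^ 2)⁻¹ -
      xC ^ 4 / 2 * ((xC ^ 2 + t ^ 2) ^ 2)⁻¹) with hG
  have hinner : ∀ φ : ℝ,
      (∫ s in (0 : ℝ)..R,
        s ^ 2 * Real.cos φ ^ 2 * (xC ^ 2 + s ^ 2 * Real.cos φ ^ 2) /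
          (xC ^ 2 + s ^ 2) ^ 3 * s) =
      Real.cos φ ^ 2 * (F R - F 0) + Real.cos φ ^ 4 * (G R - G 0) := by
    intro φ
    have hint : IntervalIntegrable
        (fun s : ℝ => s ^ 2 * Real.cos φ ^ 2 * (xC ^ 2 + s ^ 2 * Real.cos φ ^ 2) /
          (xC ^ 2 + s ^ 2) ^ 3 * s) MeasureTheory.volume 0 R := by
      apply Continuous.intervalIntegrable
      apply Continuous.mul _ continuous_id
      apply Continuous.div (by continuity) (by continuity)
      intro s
      positivity
    have := intervalIntegral.integral_eq_sub_of_hasDerivAt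
      (f := fun t : ℝ => Real.cos φ ^ 2 * F t + Real.cos φ ^ 4 * G t)
      (fun s _ => hasDerivAt_K xC (Real.cos φ) hx s) hint
    rw [this]; ring
  rw [intervalIntegral.integral_congr (g := fun φ : ℝ =>
      Real.cos φ ^ 2 * (F R - F 0) + Real.cos φ ^ 4 * (G R - G 0))
      (fun φ _ => hinner φ)]
  have hout : IntervalIntegrable
      (fun φ : ℝ => Real.cos φ ^ 2 * (F R - F 0) + Real.cos φ ^ 4 * (G R - G 0))
      MeasureTheory.volume 0 (2 * Real.pi) := by
    apply Continuous.intervalIntegrable; continuity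
  rw [intervalIntegral.integral_eq_sub_of_hasDerivAt
      (f := fun φ : ℝ =>
        (F R - F 0) * (φ / 2 + Real.sin (2 * φ) / 4) +
        (G R - G 0) * (3 * φ / 8 + Real.sin (2 * φ) / 4 + Real.sin (4 * φ) / 32))
      (fun φ _ => hasDerivAt_H (F R - F 0) (G R - G 0) φ) hout]
  have hs4 : Real.sin (2 * (2 * Real.pi)) = 0 := by
    rw [show 2 * (2 * Real.pi) = (4 : ℕ) * Real.pi by push_cast; ring]
    exact Real.sin_nat_mul_pi 4
  have hs8 : Real.sin (4 * (2 * Real.pi)) = 0 := by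
    rw [show 4 * (2 * Real.pi) = (8 : ℕ) * Real.pi by push_cast; ring]
    exact Real.sin_nat_mul_pi 8
  rw [hs4, hs8]
  simp only [mul_zero, Real.sin_zero]
  simp only [hF, hG]
  have hx2 : (0 : ℝ) < xC ^ 2 := by positivity
  have hxR : (0 : ℝ) < xC ^ 2 + R ^ 2 := by positivity
  have hlog : Real.log (1 + R ^ 2 / xC ^ 2) =
      Real.log (xC ^ 2 + R ^ 2) - Real.log (xC ^ 2) := by
    rw [show 1 + R ^ 2 / xC ^ 2 = (xC ^ 2 + R ^ 2) / xC ^ 2 by field_simp,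
      Real.log_div hxR.ne' hx2.ne']
  rw [hlog]
  have h0 : Real.log (xC ^ 2 + 0 ^ 2) = Real.log (xC ^ 2) := by norm_num
  rw [h0]
  field_simp
  ring
end

section
/- With $k = 2\pi/\lambda$ and $\rho > 0$, both bounds $\mathscr{I}_5^{(l)}(\rho) = k^2[\frac{\pi}{8}\ln(1+\rho^2) + \frac{\pi}{16}\frac{\rho^2(\rho^2-2)}{(1+\rho^2)^2}]$ and $\mathscr{I}_5^{(u)}(\rho) = k^2[\frac{\pi}{8}\ln(1+2\rho^2) + \frac{\pi}{4}\frac{\rho^2(\rho^2-1)}{(1+2\rho^2)^2}]$ satisfy $\lim_{\rho\to\infty} \frac{\ln\rho}{\mathscr{I}_5^{(\cdot)}(\rho)} = \frac{\lambda^2}{\pi^3}$. -/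
open Real Filter

private lemma log_ratio_aux (c : ℝ) (hc : 0 < c) :
    Tendsto (fun ρ : ℝ => Real.log (1 + c * ρ ^ 2) / Real.log ρ) atTop (nhds 2) := by
  have h2 : Tendsto (fun ρ : ℝ => Real.log (ρ⁻¹ ^ 2 + c)) atTop (nhds (Real.log c)) := by
    have h0 : Tendsto (fun ρ : ℝ => ρ⁻¹ ^ 2 + c) atTop (nhds (0 ^ 2 + c)) :=
      ((tendsto_inv_atTop_zero.pow 2)).add tendsto_const_nhds
    have := (Real.continuousAt_log hc.ne').tendsto.comp (by simpa using h0)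
    simpa [Function.comp_def] using this
  have h3 : Tendsto (fun ρ : ℝ => 2 + Real.log (ρ⁻¹ ^ 2 + c) / Real.log ρ) atTop (nhds 2) := by
    have := h2.div_atTop Real.tendsto_log_atTop
    simpa using tendsto_const_nhds.add this
  refine h3.congr' ?_
  filter_upwards [eventually_gt_atTop 1] with ρ hρ
  have hρ0 : 0 < ρ := lt_trans one_pos hρ
  have key : 1 + c * ρ ^ 2 = ρ ^ 2 * (ρ⁻¹ ^ 2 + c) := by field_simp
  rw [key, Real.log_mul (by positivity) (by positivity), Real.log_pow]
  have hlog : Real.log ρ ≠ 0 := ne_of_gt (Real.log_pos hρ)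
  field_simp
  push_cast
  ring

private lemma rat_aux (a b : ℝ) (hb : 0 < b) :
    Tendsto (fun ρ : ℝ => ρ ^ 2 * (ρ ^ 2 - a) / (1 + b * ρ ^ 2) ^ 2) atTop
      (nhds (1 / b ^ 2)) := by
  have h1 : Tendsto (fun ρ : ℝ => (1 - a * ρ⁻¹ ^ 2) / (ρ⁻¹ ^ 2 + b) ^ 2) atTop
      (nhds ((1 - a * 0) / (0 + b) ^ 2)) := by
    have hz : Tendsto (fun ρ : ℝ => ρ⁻¹ ^ 2) atTop (nhds 0) := by
      simpa using (tendsto_inv_atTop_zero : Tendsto (fun ρ : ℝ => ρ⁻¹) atTop (nhds 0)).pow 2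
    exact (tendsto_const_nhds.sub (tendsto_const_nhds.mul hz)).div
      ((hz.add tendsto_const_nhds).pow 2) (by positivity)
  have h1' : Tendsto (fun ρ : ℝ => (1 - a * ρ⁻¹ ^ 2) / (ρ⁻¹ ^ 2 + b) ^ 2) atTop
      (nhds (1 / b ^ 2)) := by simpa using h1
  refine h1'.congr' ?_
  filter_upwards [eventually_gt_atTop 0] with ρ hρ
  have h2 : (1 : ℝ) + b * ρ ^ 2 ≠ 0 := by positivity
  have h3 : (ρ⁻¹ ^ 2 + b) ≠ 0 := by positivity
  field_simp

private lemma gen_aux (k lam : ℝ) (hlam : 0 < lam) (hk : k = 2 * Real.pi / lam)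
    (c coef a : ℝ) (hc : 0 < c) :
    Tendsto
      (fun ρ : ℝ =>
        Real.log ρ /
          (k ^ 2 * (Real.pi / 8 * Real.log (1 + c * ρ ^ 2) +
            coef * (ρ ^ 2 * (ρ ^ 2 - a) / (1 + c * ρ ^ 2) ^ 2))))
      atTop (nhds (lam ^ 2 / Real.pi ^ 3)) := by
  have hpi := Real.pi_pos
  have hk0 : 0 < k := by rw [hk]; positivity
  have hrat0 : Tendsto
      (fun ρ : ℝ => (ρ ^ 2 * (ρ ^ 2 - a) / (1 + c * ρ ^ 2) ^ 2) / Real.log ρ) atTop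
      (nhds 0) := (rat_aux a c hc).div_atTop Real.tendsto_log_atTop
  have hD : Tendsto
      (fun ρ : ℝ =>
        (k ^ 2 * (Real.pi / 8 * Real.log (1 + c * ρ ^ 2) +
          coef * (ρ ^ 2 * (ρ ^ 2 - a) / (1 + c * ρ ^ 2) ^ 2))) / Real.log ρ)
      atTop (nhds (k ^ 2 * (Real.pi / 8 * 2 + coef * 0))) := by
    have := (tendsto_const_nhds.mul
      ((tendsto_const_nhds.mul (log_ratio_aux c hc)).add
        (tendsto_const_nhds.mul hrat0)) :
      Tendsto (fun ρ : ℝ =>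
        k ^ 2 * (Real.pi / 8 * (Real.log (1 + c * ρ ^ 2) / Real.log ρ) +
          coef * ((ρ ^ 2 * (ρ ^ 2 - a) / (1 + c * ρ ^ 2) ^ 2) / Real.log ρ)))
        atTop (nhds (k ^ 2 * (Real.pi / 8 * 2 + coef * 0))))
    refine this.congr fun ρ => ?_
    ring
  have hval : k ^ 2 * (Real.pi / 8 * 2 + coef * 0) = Real.pi ^ 3 / lam ^ 2 := by
    rw [hk]; field_simp; ring
  rw [hval] at hD
  have hne : Real.pi ^ 3 / lam ^ 2 ≠ 0 := by positivity
  have := hD.inv₀ hne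
  have hinv : (Real.pi ^ 3 / lam ^ 2)⁻¹ = lam ^ 2 / Real.pi ^ 3 := by
    rw [inv_div]
  rw [hinv] at this
  refine this.congr fun ρ => ?_
  rw [inv_div]

theorem CRB_zC_limits (k lam : ℝ) (hlam : 0 < lam) (hk : k = 2 * Real.pi / lam) :
    Filter.Tendsto
        (fun ρ : ℝ =>
          Real.log ρ /
            (k ^ 2 * (Real.pi / 8 * Real.log (1 + ρ ^ 2) +
              Real.pi / 16 * (ρ ^ 2 * (ρ ^ 2 - 2) / (1 + ρ ^ 2) ^ 2))))
        Filter.atTop (nhds (lam ^ 2 / Real.pi ^ 3)) ∧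
    Filter.Tendsto
        (fun ρ : ℝ =>
          Real.log ρ /
            (k ^ 2 * (Real.pi / 8 * Real.log (1 + 2 * ρ ^ 2) +
              Real.pi / 4 * (ρ ^ 2 * (ρ ^ 2 - 1) / (1 + 2 * ρ ^ 2) ^ 2))))
        Filter.atTop (nhds (lam ^ 2 / Real.pi ^ 3)) := by
  constructor
  · simpa using gen_aux k lam hlam hk 1 (Real.pi / 16) 2 one_pos
  · exact gen_aux k lam hlam hk 2 (Real.pi / 4) 1 two_pos
end

section
/- For fixed $k>0$ and $x_C>0$, the function $\mathscr{I}_1(\rho) = \frac{\rho k^2}{2(1+\rho^2)}\left[\frac{7+6\rho^2}{\sqrt{1+\rho^2}}\arctan\frac{\rho}{\sqrt{1+\rho^2}} + \frac{\rho}{1+2\rho^2}\right]$ is strictly positive for all $\rho > 0$ and satisfies $\mathscr{I}_1(\rho) \le \frac{3\pi}{4}k^2$ in the limit sense, i.e. $\sup_{\rho>0}\mathscr{I}_1(\rho) = \frac{3\pi}{4}k^2$; consequently $\mathrm{CRB}(x_C) \approx \mathrm{SNR}^{-1}/\mathscr{I}_1(\rho) \ge \frac{\mathrm{SNR}^{-1}\lambda^2}{3\pi^3}$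 for all $\rho>0$ when $k = 2\pi/\lambda$. -/
open Real Filter

private lemma aux_arctan_le {x : ℝ} (h : x ≤ 1) : Real.arctan x ≤ Real.pi / 4 := by
  rw [← Real.arctan_one]; exact Real.arctan_strictMono.monotone h

private lemma aux_arctan_pos {x : ℝ} (h : 0 < x) : 0 < Real.arctan x := by
  rw [← Real.arctan_zero]; exact Real.arctan_strictMono h

/-- The k-free core inequality. -/
private lemma aux_le (ρ : ℝ) (hρ : 0 < ρ) :
    ρ / (2 * (1 + ρ ^ 2)) *
      ((7 + 6 * ρ ^ 2) / Real.sqrt (1 + ρ ^ 2) * Real.arctan (ρ / Real.sqrt (1 + ρ ^ 2)) +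
        ρ / (1 + 2 * ρ ^ 2)) ≤ 3 * Real.pi / 4 := by
  set s := Real.sqrt (1 + ρ ^ 2) with hsdef
  have h1 : (0:ℝ) < 1 + ρ ^ 2 := by positivity
  have hs2 : s ^ 2 = 1 + ρ ^ 2 := Real.sq_sqrt h1.le
  have hs0 : 0 < s := Real.sqrt_pos.mpr h1
  have hρs : ρ < s := by nlinarith [hs2]
  have h2 : (0:ℝ) < 1 + 2 * ρ ^ 2 := by positivity
  have hA : Real.arctan (ρ / s) ≤ Real.pi / 4 :=
    aux_arctan_le (by rw [div_le_one hs0]; linarith)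
  have step1 : ρ / (2 * (1 + ρ ^ 2)) *
      ((7 + 6 * ρ ^ 2) / s * Real.arctan (ρ / s) + ρ / (1 + 2 * ρ ^ 2)) ≤
      ρ / (2 * (1 + ρ ^ 2)) * ((7 + 6 * ρ ^ 2) / s * (Real.pi / 4) + ρ / (1 + 2 * ρ ^ 2)) := by
    apply mul_le_mul_of_nonneg_left _ (by positivity)
    have : (7 + 6 * ρ ^ 2) / s * Real.arctan (ρ / s) ≤ (7 + 6 * ρ ^ 2) / s * (Real.pi / 4) :=
      mul_le_mul_of_nonneg_left hA (by positivity)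
    linarith
  refine step1.trans ?_
  have hdiff : (6*s*(1+ρ^2))^2 - (ρ*(7+6*ρ^2))^2 = 36 + 59*ρ^2 + 24*ρ^4 := by
    linear_combination (36*(1+ρ^2)^2) * hs2
  have hsumpos : 0 < 6*s*(1+ρ^2) + ρ*(7+6*ρ^2) := by positivity
  have hD : 0 ≤ 6*s*(1+ρ^2) - ρ*(7+6*ρ^2) := by
    nlinarith [hdiff, hsumpos, sq_nonneg ρ]
  have hsum_le : 6*s*(1+ρ^2) + ρ*(7+6*ρ^2) ≤ s*(13+12*ρ^2) := by
    nlinarith [mul_le_mul_of_nonneg_right hρs.le (show (0:ℝ) ≤ 7+6*ρ^2 by positivity)]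
  have hprod : 36 + 59*ρ^2 + 24*ρ^4 ≤ s*(13+12*ρ^2) * (6*s*(1+ρ^2) - ρ*(7+6*ρ^2)) := by
    nlinarith [hdiff, hD, hsum_le]
  have hpoly : 4*ρ^2*(1+ρ^2)*(13+12*ρ^2) ≤ Real.pi*(1+2*ρ^2)*(36+59*ρ^2+24*ρ^4) := by
    nlinarith [sq_nonneg ρ, sq_nonneg (ρ^2),
      mul_le_mul_of_nonneg_right Real.pi_gt_three.le
        (show (0:ℝ) ≤ (1+2*ρ^2)*(36+59*ρ^2+24*ρ^4) by positivity)]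
  have hmain : 4*ρ^2*s ≤ Real.pi*(1+2*ρ^2)*(6*s*(1+ρ^2) - ρ*(7+6*ρ^2)) := by
    have hpos : (0:ℝ) < s*(13+12*ρ^2) := by positivity
    apply le_of_mul_le_mul_right _ hpos
    have e : 4*ρ^2*s * (s*(13+12*ρ^2)) = 4*ρ^2*(1+ρ^2)*(13+12*ρ^2) := by
      linear_combination (4*ρ^2*(13+12*ρ^2)) * hs2
    rw [e]
    calc 4*ρ^2*(1+ρ^2)*(13+12*ρ^2) ≤ Real.pi*(1+2*ρ^2)*(36+59*ρ^2+24*ρ^4) := hpoly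
      _ ≤ Real.pi*(1+2*ρ^2)*(s*(13+12*ρ^2)*(6*s*(1+ρ^2) - ρ*(7+6*ρ^2))) :=
          mul_le_mul_of_nonneg_left hprod (by positivity)
      _ = Real.pi*(1+2*ρ^2)*(6*s*(1+ρ^2) - ρ*(7+6*ρ^2)) * (s*(13+12*ρ^2)) := by ring
  have expand : ρ / (2 * (1 + ρ ^ 2)) * ((7 + 6 * ρ ^ 2) / s * (Real.pi/4) + ρ / (1 + 2 * ρ ^ 2))
      = (ρ*((7+6*ρ^2)*(Real.pi/4)*(1+2*ρ^2) + ρ*s)) / (2*(1+ρ^2)*s*(1+2*ρ^2)) := by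
    field_simp
  rw [expand, div_le_iff₀ (by positivity)]
  nlinarith [hmain]

/-- The substituted function of y = 1/ρ. -/
noncomputable def auxG (k : ℝ) (y : ℝ) : ℝ :=
  k^2 * ((7*y^2+6)/(2*(y^2+1)*Real.sqrt (y^2+1)) * Real.arctan (1/Real.sqrt (y^2+1)) +
    y^2/(2*(y^2+1)*(y^2+2)))

private lemma auxG_cont (k : ℝ) : ContinuousAt (auxG k) 0 := by
  have hsc : Continuous fun y : ℝ => Real.sqrt (y^2+1) :=
    Real.continuous_sqrt.comp (by continuity)
  have h0 : Real.sqrt ((0:ℝ)^2+1) = 1 := by norm_num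
  apply ContinuousAt.mul continuousAt_const
  apply ContinuousAt.add
  · apply ContinuousAt.mul
    · exact ContinuousAt.div
        ((by continuity : Continuous fun y : ℝ => 7*y^2+6).continuousAt)
        (((continuous_const.mul (by continuity : Continuous fun y : ℝ => y^2+1)).mul hsc).continuousAt)
        (by norm_num)
    · exact Real.continuous_arctan.continuousAt.comp
        (ContinuousAt.div continuousAt_const hsc.continuousAt (by norm_num))
  · exact ContinuousAt.div (by fun_prop) (by fun_prop) (by norm_num)

private lemma auxG_zero (k : ℝ) : auxG k 0 = 3 * Real.pi / 4 * k ^ 2 := by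
  unfold auxG
  norm_num [Real.arctan_one]
  ring

private lemma auxG_eq (k ρ : ℝ) (hρ : 0 < ρ) :
    auxG k ρ⁻¹ = ρ * k ^ 2 / (2 * (1 + ρ ^ 2)) *
      ((7 + 6 * ρ ^ 2) / Real.sqrt (1 + ρ ^ 2) * Real.arctan (ρ / Real.sqrt (1 + ρ ^ 2)) +
        ρ / (1 + 2 * ρ ^ 2)) := by
  have hw0 : 0 < Real.sqrt ((ρ⁻¹)^2+1) := Real.sqrt_pos.mpr (by positivity)
  have hsw : Real.sqrt (1 + ρ ^ 2) = ρ * Real.sqrt ((ρ⁻¹)^2+1) := by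
    rw [show (1:ℝ) + ρ ^ 2 = ρ^2 * ((ρ⁻¹)^2+1) by field_simp,
      Real.sqrt_mul (sq_nonneg ρ), Real.sqrt_sq hρ.le]
  have harg : ρ / Real.sqrt (1 + ρ ^ 2) = 1 / Real.sqrt ((ρ⁻¹)^2+1) := by
    rw [hsw]
    field_simp
  unfold auxG
  rw [harg, hsw]
  have h1 : (0:ℝ) < 1 + ρ ^ 2 := by positivity
  field_simp

private lemma auxTendsto (k : ℝ) :
    Tendsto (fun ρ : ℝ => ρ * k ^ 2 / (2 * (1 + ρ ^ 2)) *
      ((7 + 6 * ρ ^ 2) / Real.sqrt (1 + ρ ^ 2) * Real.arctan (ρ / Real.sqrt (1 + ρ ^ 2)) +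
        ρ / (1 + 2 * ρ ^ 2))) atTop (nhds (3 * Real.pi / 4 * k ^ 2)) := by
  have h := ((auxG_cont k).tendsto.comp tendsto_inv_atTop_zero)
  rw [auxG_zero] at h
  apply h.congr'
  filter_upwards [eventually_gt_atTop (0:ℝ)] with ρ hρ
  exact auxG_eq k ρ hρ

theorem I1_bounded_and_CRB_floor (k lam SNR : ℝ) (hk : 0 < k) (hlam : 0 < lam)
    (hklam : k = 2 * Real.pi / lam) (hSNR : 0 < SNR) :
    (∀ ρ : ℝ, 0 < ρ →
      0 < ρ * k ^ 2 / (2 * (1 + ρ ^ 2)) *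
        ((7 + 6 * ρ ^ 2) / Real.sqrt (1 + ρ ^ 2) *
            Real.arctan (ρ / Real.sqrt (1 + ρ ^ 2)) +
          ρ / (1 + 2 * ρ ^ 2))) ∧
    IsLUB
      ((fun ρ : ℝ =>
          ρ * k ^ 2 / (2 * (1 + ρ ^ 2)) *
            ((7 + 6 * ρ ^ 2) / Real.sqrt (1 + ρ ^ 2) *
                Real.arctan (ρ / Real.sqrt (1 + ρ ^ 2)) +
              ρ / (1 + 2 * ρ ^ 2))) '' Set.Ioi 0)
      (3 * Real.pi / 4 * k ^ 2) ∧
    (∀ ρ : ℝ, 0 < ρ →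
      SNR⁻¹ /
        (ρ * k ^ 2 / (2 * (1 + ρ ^ 2)) *
          ((7 + 6 * ρ ^ 2) / Real.sqrt (1 + ρ ^ 2) *
              Real.arctan (ρ / Real.sqrt (1 + ρ ^ 2)) +
            ρ / (1 + 2 * ρ ^ 2))) ≥
      SNR⁻¹ * lam ^ 2 / (3 * Real.pi ^ 3)) := by
  have hpos : ∀ ρ : ℝ, 0 < ρ →
      0 < ρ * k ^ 2 / (2 * (1 + ρ ^ 2)) *
        ((7 + 6 * ρ ^ 2) / Real.sqrt (1 + ρ ^ 2) * Real.arctan (ρ / Real.sqrt (1 + ρ ^ 2)) +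
          ρ / (1 + 2 * ρ ^ 2)) := by
    intro ρ hρ
    have h1 : (0:ℝ) < 1 + ρ ^ 2 := by positivity
    have hs0 : 0 < Real.sqrt (1 + ρ ^ 2) := Real.sqrt_pos.mpr h1
    have hA : 0 < Real.arctan (ρ / Real.sqrt (1 + ρ ^ 2)) := aux_arctan_pos (by positivity)
    have hB : 0 < (7 + 6 * ρ ^ 2) / Real.sqrt (1 + ρ ^ 2) *
        Real.arctan (ρ / Real.sqrt (1 + ρ ^ 2)) + ρ / (1 + 2 * ρ ^ 2) :=
      add_pos (mul_pos (by positivity) hA) (by positivity)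
    exact mul_pos (by positivity) hB
  have hle : ∀ ρ : ℝ, 0 < ρ →
      ρ * k ^ 2 / (2 * (1 + ρ ^ 2)) *
        ((7 + 6 * ρ ^ 2) / Real.sqrt (1 + ρ ^ 2) * Real.arctan (ρ / Real.sqrt (1 + ρ ^ 2)) +
          ρ / (1 + 2 * ρ ^ 2)) ≤ 3 * Real.pi / 4 * k ^ 2 := by
    intro ρ hρ
    have h := aux_le ρ hρ
    have hrw : ρ * k ^ 2 / (2 * (1 + ρ ^ 2)) *
        ((7 + 6 * ρ ^ 2) / Real.sqrt (1 + ρ ^ 2) * Real.arctan (ρ / Real.sqrt (1 + ρ ^ 2)) +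
          ρ / (1 + 2 * ρ ^ 2))
        = k ^ 2 * (ρ / (2 * (1 + ρ ^ 2)) *
        ((7 + 6 * ρ ^ 2) / Real.sqrt (1 + ρ ^ 2) * Real.arctan (ρ / Real.sqrt (1 + ρ ^ 2)) +
          ρ / (1 + 2 * ρ ^ 2))) := by ring
    rw [hrw]
    calc k ^ 2 * (ρ / (2 * (1 + ρ ^ 2)) *
        ((7 + 6 * ρ ^ 2) / Real.sqrt (1 + ρ ^ 2) * Real.arctan (ρ / Real.sqrt (1 + ρ ^ 2)) +
          ρ / (1 + 2 * ρ ^ 2))) ≤ k ^ 2 * (3 * Real.pi / 4) :=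
        mul_le_mul_of_nonneg_left h (sq_nonneg k)
      _ = 3 * Real.pi / 4 * k ^ 2 := by ring
  refine ⟨hpos, ⟨?_, ?_⟩, ?_⟩
  · rintro x ⟨ρ, hρ, rfl⟩
    exact hle ρ hρ
  · intro b hb
    refine le_of_tendsto (auxTendsto k) ?_
    filter_upwards [eventually_gt_atTop (0:ℝ)] with ρ hρ
    exact hb ⟨ρ, hρ, rfl⟩
  · intro ρ hρ
    have hI := hpos ρ hρ
    have hIle := hle ρ hρ
    have hπ : (0:ℝ) < Real.pi := Real.pi_pos
    have hk2 : 3 * Real.pi / 4 * k ^ 2 = 3 * Real.pi ^ 3 / lam ^ 2 := by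
      rw [hklam]; field_simp; ring
    rw [hk2] at hIle
    rw [ge_iff_le, div_le_div_iff₀ (by positivity) hI]
    calc SNR⁻¹ * lam ^ 2 * (ρ * k ^ 2 / (2 * (1 + ρ ^ 2)) *
        ((7 + 6 * ρ ^ 2) / Real.sqrt (1 + ρ ^ 2) * Real.arctan (ρ / Real.sqrt (1 + ρ ^ 2)) +
          ρ / (1 + 2 * ρ ^ 2)))
        ≤ SNR⁻¹ * lam ^ 2 * (3 * Real.pi ^ 3 / lam ^ 2) :=
          mul_le_mul_of_nonneg_left hIle (by positivity)
      _ = SNR⁻¹ * (3 * Real.pi ^ 3) := by field_simp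
end
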